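/- arXiv:2307.13033 — 6 statements merged into one kernel-verified Lean document; each statement's English description precedes it below -/
import Mathlib

section
/- Let a, n be natural numbers, and for each j ∈ {0,…,2^a−1} let U_j be an n×n unitary complex matrix and α_j ≥ 0 a real number, with α := Σ_j α_j > 0 and A := Σ_j α_j U_j. Let ε > 0 and let c ∈ ℂ^{2^a} be a vector with ‖c‖₂ = 1 satisfying ‖c − v‖₂ ≤ ε/(2·α·√(2^a)), where v ∈ ℝ^{2^a} is the vector with entries v_j := √(α_j/α). Then ‖α·Σ_j c_j·conj(c_j)·U_j − A‖ ≤ ε. -/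
open scoped Matrix.Norms.L2Operator

/-- **Error propagation of PREP** (paper's Lemma on PREP error).
If `c` is an `ε/(2·α·√(2^a))`-precise approximation (in Euclidean norm) of the exact
PREP state `v` with entries `√(αⱼ/α)`, then the block-encoded matrix
`α·Σⱼ cⱼ·conj(cⱼ)·Uⱼ` is `ε`-close in spectral norm to `A = Σⱼ αⱼ·Uⱼ`. -/
theorem prep_error_propagation (a n : ℕ)
    (U : Fin (2 ^ a) → Matrix (Fin n) (Fin n) ℂ)
    (hU : ∀ j, U j ∈ Matrix.unitaryGroup (Fin n) ℂ)
    (α : Fin (2 ^ a) → ℝ) (hα : ∀ j, 0 ≤ α j)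
    (αtot : ℝ) (hαtot : αtot = ∑ j, α j) (hαpos : 0 < αtot)
    (A : Matrix (Fin n) (Fin n) ℂ) (hA : A = ∑ j, (α j : ℂ) • U j)
    (ε : ℝ) (hε : 0 < ε)
    (c : EuclideanSpace ℂ (Fin (2 ^ a))) (hc : ‖c‖ = 1)
    (v : EuclideanSpace ℂ (Fin (2 ^ a)))
    (hv : ∀ j, v j = ((Real.sqrt (α j / αtot) : ℝ) : ℂ))
    (hdist : ‖c - v‖ ≤ ε / (2 * αtot * Real.sqrt (2 ^ a))) :
    ‖(αtot : ℂ) • (∑ j, (c j * (starRingEnd ℂ) (c j)) • U j) - A‖ ≤ ε := by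
  classical
  -- unitaries have operator norm at most 1
  have hone : ‖(1 : Matrix (Fin n) (Fin n) ℂ)‖ ≤ 1 := by
    have h := Matrix.l2_opNorm_conjTranspose_mul_self (1 : Matrix (Fin n) (Fin n) ℂ)
    simp only [Matrix.conjTranspose_one, one_mul] at h
    nlinarith [norm_nonneg (1 : Matrix (Fin n) (Fin n) ℂ)]
  have hUnorm : ∀ j, ‖U j‖ ≤ 1 := by
    intro j
    have h := Matrix.l2_opNorm_conjTranspose_mul_self (U j)
    have h2 : (U j).conjTranspose * U j = 1 := by
      have := (Matrix.mem_unitaryGroup_iff' ).mp (hU j)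
      simpa [Matrix.star_eq_conjTranspose] using this
    rw [h2] at h
    nlinarith [norm_nonneg (U j), hone]
  -- rewrite the difference as a single sum
  have hrw : (αtot : ℂ) • (∑ j, (c j * (starRingEnd ℂ) (c j)) • U j) - A
      = ∑ j, (((αtot : ℂ) * (c j * (starRingEnd ℂ) (c j)) - (α j : ℂ))) • U j := by
    rw [hA, Finset.smul_sum, ← Finset.sum_sub_distrib]
    refine Finset.sum_congr rfl fun j _ => ?_
    rw [smul_smul, sub_smul]
  rw [hrw]
  -- scalar bound per term
  have hvsq : ∀ j, (v j) * (starRingEnd ℂ) (v j) = ((α j / αtot : ℝ) : ℂ) := by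
    intro j
    rw [hv j]
    rw [Complex.conj_ofReal, ← Complex.ofReal_mul,
      Real.mul_self_sqrt (div_nonneg (hα j) hαpos.le)]
  have key : ∀ j, ‖((αtot : ℂ) * (c j * (starRingEnd ℂ) (c j)) - (α j : ℂ))‖
      ≤ αtot * (‖c j - v j‖ * (‖c j‖ + ‖v j‖)) := by
    intro j
    have hsplit : (αtot : ℂ) * (c j * (starRingEnd ℂ) (c j)) - (α j : ℂ)
        = (αtot : ℂ) * ((c j - v j) * (starRingEnd ℂ) (c j)
            + v j * ((starRingEnd ℂ) (c j) - (starRingEnd ℂ) (v j))) := by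
      have : ((α j : ℂ)) = (αtot : ℂ) * ((v j) * (starRingEnd ℂ) (v j)) := by
        rw [hvsq j, ← Complex.ofReal_mul, mul_div_cancel₀ _ hαpos.ne']
      rw [this]; ring
    rw [hsplit, norm_mul, Complex.norm_real, Real.norm_of_nonneg hαpos.le]
    refine mul_le_mul_of_nonneg_left ?_ hαpos.le
    calc ‖(c j - v j) * (starRingEnd ℂ) (c j)
            + v j * ((starRingEnd ℂ) (c j) - (starRingEnd ℂ) (v j))‖
        ≤ ‖(c j - v j) * (starRingEnd ℂ) (c j)‖
          + ‖v j * ((starRingEnd ℂ) (c j) - (starRingEnd ℂ) (v j))‖ := norm_add_le _ _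
      _ = ‖c j - v j‖ * ‖c j‖ + ‖v j‖ * ‖c j - v j‖ := by
          rw [norm_mul, norm_mul, ← map_sub, RCLike.norm_conj, RCLike.norm_conj]
      _ = ‖c j - v j‖ * (‖c j‖ + ‖v j‖) := by ring
  -- norms squared
  have hnormsq : ∀ (w : EuclideanSpace ℂ (Fin (2 ^ a))), ∑ j, ‖w j‖ ^ 2 = ‖w‖ ^ 2 := by
    intro w
    rw [EuclideanSpace.norm_eq, Real.sq_sqrt (Finset.sum_nonneg fun j _ => sq_nonneg _)]
  have hvnorm : ‖v‖ = 1 := by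
    have h1 : ∑ j, ‖v j‖ ^ 2 = 1 := by
      have : ∀ j, ‖v j‖ ^ 2 = α j / αtot := by
        intro j
        rw [hv j, Complex.norm_real, Real.norm_of_nonneg (Real.sqrt_nonneg _),
          Real.sq_sqrt (div_nonneg (hα j) hαpos.le)]
      rw [Finset.sum_congr rfl fun j _ => this j, ← Finset.sum_div, ← hαtot,
        div_self hαpos.ne']
    have := hnormsq v
    rw [h1] at this
    nlinarith [norm_nonneg v]
  -- Cauchy-Schwarz
  set d := ‖c - v‖ with hd
  have hsub : ∀ j, (c - v) j = c j - v j := fun j => rfl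
  have hCS : (∑ j, ‖c j - v j‖ * (‖c j‖ + ‖v j‖)) ≤ 2 * d := by
    have h1 : (∑ j, ‖c j - v j‖ * (‖c j‖ + ‖v j‖)) ^ 2
        ≤ (∑ j, ‖c j - v j‖ ^ 2) * ∑ j, (‖c j‖ + ‖v j‖) ^ 2 :=
      Finset.sum_mul_sq_le_sq_mul_sq _ _ _
    have h2 : ∑ j, ‖c j - v j‖ ^ 2 = d ^ 2 := by
      rw [← hnormsq (c - v)]
      exact Finset.sum_congr rfl fun j _ => by rw [hsub j]
    have h3 : ∑ j, (‖c j‖ + ‖v j‖) ^ 2 ≤ 4 := by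
      have : ∀ j, (‖c j‖ + ‖v j‖) ^ 2 ≤ 2 * ‖c j‖ ^ 2 + 2 * ‖v j‖ ^ 2 := by
        intro j; nlinarith [sq_nonneg (‖c j‖ - ‖v j‖)]
      calc ∑ j, (‖c j‖ + ‖v j‖) ^ 2 ≤ ∑ j, (2 * ‖c j‖ ^ 2 + 2 * ‖v j‖ ^ 2) :=
            Finset.sum_le_sum fun j _ => this j
        _ = 2 * (∑ j, ‖c j‖ ^ 2) + 2 * (∑ j, ‖v j‖ ^ 2) := by
            rw [Finset.sum_add_distrib, Finset.mul_sum, Finset.mul_sum]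
        _ = 4 := by rw [hnormsq c, hnormsq v, hc, hvnorm]; norm_num
    have hS : (∑ j, ‖c j - v j‖ * (‖c j‖ + ‖v j‖)) ^ 2 ≤ 4 * d ^ 2 := by
      calc _ ≤ (∑ j, ‖c j - v j‖ ^ 2) * ∑ j, (‖c j‖ + ‖v j‖) ^ 2 := h1
        _ ≤ d ^ 2 * 4 := by
            rw [h2]
            exact mul_le_mul_of_nonneg_left h3 (sq_nonneg _)
        _ = 4 * d ^ 2 := by ring
    have hSnn : 0 ≤ ∑ j, ‖c j - v j‖ * (‖c j‖ + ‖v j‖) :=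
      Finset.sum_nonneg fun j _ => mul_nonneg (norm_nonneg _)
        (add_nonneg (norm_nonneg _) (norm_nonneg _))
    nlinarith [norm_nonneg (c - v)]
  -- put everything together
  have hsqrt1 : (1 : ℝ) ≤ Real.sqrt (2 ^ a) := by
    rw [show (1 : ℝ) = Real.sqrt 1 by simp]
    exact Real.sqrt_le_sqrt (one_le_pow₀ (by norm_num))
  calc ‖∑ j, (((αtot : ℂ) * (c j * (starRingEnd ℂ) (c j)) - (α j : ℂ))) • U j‖
      ≤ ∑ j, ‖(((αtot : ℂ) * (c j * (starRingEnd ℂ) (c j)) - (α j : ℂ))) • U j‖ :=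
        norm_sum_le _ _
    _ ≤ ∑ j, αtot * (‖c j - v j‖ * (‖c j‖ + ‖v j‖)) := by
        refine Finset.sum_le_sum fun j _ => ?_
        rw [norm_smul]
        calc ‖((αtot : ℂ) * (c j * (starRingEnd ℂ) (c j)) - (α j : ℂ))‖ * ‖U j‖
            ≤ ‖((αtot : ℂ) * (c j * (starRingEnd ℂ) (c j)) - (α j : ℂ))‖ * 1 :=
              mul_le_mul_of_nonneg_left (hUnorm j) (norm_nonneg _)
          _ = ‖((αtot : ℂ) * (c j * (starRingEnd ℂ) (c j)) - (α j : ℂ))‖ := mul_one _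
          _ ≤ αtot * (‖c j - v j‖ * (‖c j‖ + ‖v j‖)) := key j
    _ = αtot * ∑ j, ‖c j - v j‖ * (‖c j‖ + ‖v j‖) := by rw [Finset.mul_sum]
    _ ≤ αtot * (2 * d) := mul_le_mul_of_nonneg_left hCS hαpos.le
    _ ≤ αtot * (2 * (ε / (2 * αtot * Real.sqrt (2 ^ a)))) :=
        mul_le_mul_of_nonneg_left (by linarith) hαpos.le
    _ = ε / Real.sqrt (2 ^ a) := by
        field_simp
    _ ≤ ε := by
        rw [div_le_iff₀ (by positivity)]
        nlinarith
end

section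
/- Let s, a, b, m be natural numbers with 1 ≤ m ≤ 2^b, let α, β > 0 and ε₁, ε₂ ≥ 0. Let y : {0,…,m−1} → ℂ with Σ_j |y_j| ≤ β, let A_j be 2^s×2^s complex matrices and set A := Σ_{j<m} y_j·A_j. Suppose each U_j (for j < m) is a unitary matrix on ℂ^{2^a}⊗ℂ^{2^s} that is an (α,a,ε₂)-block-encoding of A_j. Let P_L, P_R be 2^b×2^b unitary matrices and set c_j := (P_L)_{j,0} and d_j := (P_R)_{j,0}; assume Σ_{j<m} |β·conj(c_j)·d_j − y_j| ≤ ε₁ and conj(c_j)·d_j = 0 for all m ≤ j < 2^b. Define W := Σ_{j<m} E_{j,j} ⊗ U_j + (I_{2^b} − Σ_{j<m} E_{j,j}) ⊗ I_{2^a·2^s}, where E_{j,j} is a standard matrix unit. Then ‖A − α·β·(⟨0|^{⊗b}⊗⟨0|^{⊗a}⊗I_{2^s})·(P_L†⊗I)·W·(P_R⊗I)·(|0⟩^{⊗b}⊗|0⟩^{⊗a}⊗I_{2^s})‖ ≤ α·ε₁ + β·ε₂. -/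
open scoped Matrix.Norms.L2Operator Kronecker Matrix

-- unitary has norm ≤ 1
lemma aux_norm_unitary {n : Type*} [Fintype n] [DecidableEq n] [Nonempty n]
    (U : Matrix n n ℂ) (h : U ∈ Matrix.unitaryGroup n ℂ) : ‖U‖ = 1 := by
  have h1 : Uᴴ * U = 1 := by
    have := h.1; rwa [Matrix.star_eq_conjTranspose] at this
  have := Matrix.l2_opNorm_conjTranspose_mul_self U
  rw [h1] at this
  nlinarith [norm_nonneg U, (norm_one : ‖(1 : Matrix n n ℂ)‖ = 1)]

-- the compression matrix
lemma aux_norm_block {a s : ℕ} (U : Matrix (Fin (2^a) × Fin (2^s)) (Fin (2^a) × Fin (2^s)) ℂ)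
    (hU : U ∈ Matrix.unitaryGroup (Fin (2^a) × Fin (2^s)) ℂ) :
    ‖(Matrix.of (fun i k : Fin (2^s) => U (0, i) (0, k)))‖ ≤ 1 := by
  classical
  set B : Matrix (Fin (2^s)) (Fin (2^a) × Fin (2^s)) ℂ :=
    Matrix.of (fun i p => if p = (0, i) then 1 else 0) with hB
  have hBB : B * Bᴴ = 1 := by
    ext i k
    simp [hB, Matrix.mul_apply, Matrix.conjTranspose_apply, Matrix.one_apply,
      apply_ite, Prod.ext_iff, ite_and, eq_comm, Fintype.sum_prod_type, Finset.sum_ite_eq, Finset.sum_ite_eq']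
  have hnB : ‖B‖ = 1 := by
    have h2 := Matrix.l2_opNorm_conjTranspose_mul_self Bᴴ
    rw [Matrix.conjTranspose_conjTranspose, hBB] at h2
    have h3 : ‖Bᴴ‖ = ‖B‖ := Matrix.l2_opNorm_conjTranspose B
    rw [h3] at h2
    nlinarith [norm_nonneg B, (norm_one : ‖(1 : Matrix (Fin (2^s)) (Fin (2^s)) ℂ)‖ = 1)]
  have hblk : Matrix.of (fun i k : Fin (2^s) => U (0, i) (0, k)) = B * U * Bᴴ := by
    ext i k
    simp [hB, Matrix.mul_apply, Matrix.conjTranspose_apply, apply_ite, ite_and, Fintype.sum_prod_type, Finset.sum_ite_eq, Finset.sum_ite_eq']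
  rw [hblk]
  calc ‖B * U * Bᴴ‖ ≤ ‖B * U‖ * ‖Bᴴ‖ := Matrix.l2_opNorm_mul _ _
    _ ≤ ‖B‖ * ‖U‖ * ‖Bᴴ‖ := by
        have := Matrix.l2_opNorm_mul B U
        have h4 : (0:ℝ) ≤ ‖Bᴴ‖ := norm_nonneg _
        nlinarith
    _ = 1 := by rw [Matrix.l2_opNorm_conjTranspose, hnB, aux_norm_unitary U hU]; ring

/-- **Linear combination of block-encoded matrices** via a state-preparation pair
(improved version of Lemma 29 of Gilyén et al., as in the paper). -/
theorem linear_combination_of_block_encodings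
    (s a b m : ℕ) (hm1 : 1 ≤ m) (hm : m ≤ 2 ^ b)
    (α β : ℝ) (hα : 0 < α) (hβ : 0 < β)
    (ε₁ ε₂ : ℝ) (hε₁ : 0 ≤ ε₁) (hε₂ : 0 ≤ ε₂)
    (y : Fin m → ℂ) (hy : ∑ j, ‖y j‖ ≤ β)
    (A : Fin m → Matrix (Fin (2 ^ s)) (Fin (2 ^ s)) ℂ)
    (Atot : Matrix (Fin (2 ^ s)) (Fin (2 ^ s)) ℂ) (hAtot : Atot = ∑ j, y j • A j)
    (U : Fin m → Matrix (Fin (2 ^ a) × Fin (2 ^ s)) (Fin (2 ^ a) × Fin (2 ^ s)) ℂ)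
    (hUunitary : ∀ j, U j ∈ Matrix.unitaryGroup (Fin (2 ^ a) × Fin (2 ^ s)) ℂ)
    -- each `U j` is an `(α, a, ε₂)`-block-encoding of `A j`
    (hUblock : ∀ j, ‖A j -
      (α : ℂ) • Matrix.of (fun i k : Fin (2 ^ s) => U j (0, i) (0, k))‖ ≤ ε₂)
    (PL PR : Matrix (Fin (2 ^ b)) (Fin (2 ^ b)) ℂ)
    (hPL : PL ∈ Matrix.unitaryGroup (Fin (2 ^ b)) ℂ)
    (hPR : PR ∈ Matrix.unitaryGroup (Fin (2 ^ b)) ℂ)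
    (c d : Fin (2 ^ b) → ℂ)
    (hc : ∀ j, c j = PL j 0) (hd : ∀ j, d j = PR j 0)
    -- `(PL, PR)` is a `(β, b, ε₁)`-state-preparation pair for `y`
    (hprep : ∑ j : Fin m,
      ‖(β : ℂ) * (starRingEnd ℂ) (c (Fin.castLE hm j)) * d (Fin.castLE hm j) - y j‖
        ≤ ε₁)
    (hzero : ∀ j : Fin (2 ^ b), m ≤ (j : ℕ) → (starRingEnd ℂ) (c j) * d j = 0)
    (W : Matrix (Fin (2 ^ b) × (Fin (2 ^ a) × Fin (2 ^ s)))
          (Fin (2 ^ b) × (Fin (2 ^ a) × Fin (2 ^ s))) ℂ)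
    (hW : W = (∑ j : Fin m,
        Matrix.single (Fin.castLE hm j) (Fin.castLE hm j) (1 : ℂ) ⊗ₖ U j)
      + ((1 : Matrix (Fin (2 ^ b)) (Fin (2 ^ b)) ℂ)
          - ∑ j : Fin m, Matrix.single (Fin.castLE hm j) (Fin.castLE hm j) (1 : ℂ)) ⊗ₖ
        (1 : Matrix (Fin (2 ^ a) × Fin (2 ^ s)) (Fin (2 ^ a) × Fin (2 ^ s)) ℂ)) :
    ‖Atot - ((α * β : ℝ) : ℂ) • Matrix.of (fun i k : Fin (2 ^ s) =>
        ((PLᴴ ⊗ₖ (1 : Matrix (Fin (2 ^ a) × Fin (2 ^ s)) (Fin (2 ^ a) × Fin (2 ^ s)) ℂ)) * W *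
          (PR ⊗ₖ (1 : Matrix (Fin (2 ^ a) × Fin (2 ^ s)) (Fin (2 ^ a) × Fin (2 ^ s)) ℂ)))
          (0, (0, i)) (0, (0, k)))‖
      ≤ α * ε₁ + β * ε₂ := by
  classical
  set blk : Fin m → Matrix (Fin (2 ^ s)) (Fin (2 ^ s)) ℂ :=
    fun j => Matrix.of (fun i k : Fin (2 ^ s) => U j (0, i) (0, k)) with hblkdef
  -- mixed product lemma
  have key : ∀ (X : Matrix (Fin (2 ^ b)) (Fin (2 ^ b)) ℂ)
      (V : Matrix (Fin (2 ^ a) × Fin (2 ^ s)) (Fin (2 ^ a) × Fin (2 ^ s)) ℂ),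
      (PLᴴ ⊗ₖ (1 : Matrix (Fin (2 ^ a) × Fin (2 ^ s)) (Fin (2 ^ a) × Fin (2 ^ s)) ℂ)) *
        (X ⊗ₖ V) * (PR ⊗ₖ (1 : Matrix (Fin (2 ^ a) × Fin (2 ^ s)) (Fin (2 ^ a) × Fin (2 ^ s)) ℂ))
        = (PLᴴ * X * PR) ⊗ₖ V := by
    intro X V
    rw [← Matrix.mul_kronecker_mul, ← Matrix.mul_kronecker_mul, one_mul, mul_one]
  -- product expansion
  have hprod : (PLᴴ ⊗ₖ (1 : Matrix (Fin (2 ^ a) × Fin (2 ^ s)) (Fin (2 ^ a) × Fin (2 ^ s)) ℂ)) *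
      W * (PR ⊗ₖ (1 : Matrix (Fin (2 ^ a) × Fin (2 ^ s)) (Fin (2 ^ a) × Fin (2 ^ s)) ℂ))
      = (∑ j : Fin m, (PLᴴ * Matrix.single (Fin.castLE hm j) (Fin.castLE hm j) (1 : ℂ)
            * PR) ⊗ₖ U j)
        + (PLᴴ * ((1 : Matrix (Fin (2 ^ b)) (Fin (2 ^ b)) ℂ)
            - ∑ j : Fin m, Matrix.single (Fin.castLE hm j) (Fin.castLE hm j) (1 : ℂ))
            * PR) ⊗ₖ (1 : Matrix (Fin (2 ^ a) × Fin (2 ^ s)) (Fin (2 ^ a) × Fin (2 ^ s)) ℂ) := by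
    rw [hW, mul_add, add_mul]
    congr 1
    · rw [Finset.mul_sum, Finset.sum_mul]
      exact Finset.sum_congr rfl fun j _ => key _ _
    · exact key _ _
  -- coefficient of each kronecker summand
  have coef1 : ∀ j : Fin m,
      (PLᴴ * Matrix.single (Fin.castLE hm j) (Fin.castLE hm j) (1 : ℂ) * PR) 0 0
        = (starRingEnd ℂ) (c (Fin.castLE hm j)) * d (Fin.castLE hm j) := by
    intro j
    rw [Matrix.mul_assoc, Matrix.mul_apply]
    rw [Finset.sum_eq_single (Fin.castLE hm j)]
    · rw [Matrix.single_mul_apply_same, one_mul, Matrix.conjTranspose_apply,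
        hc, hd, starRingEnd_apply]
    · intro q _ hq
      rw [Matrix.single_mul_apply_of_ne _ _ _ _ _ hq, mul_zero]
    · simp
  -- total sum of coefficients
  have hsum0 : ∑ q : Fin (2 ^ b), (starRingEnd ℂ) (c q) * d q
      = ∑ j : Fin m, (starRingEnd ℂ) (c (Fin.castLE hm j)) * d (Fin.castLE hm j) := by
    have hmap := Finset.sum_map (Finset.univ : Finset (Fin m))
      ⟨Fin.castLE hm, Fin.castLE_injective hm⟩
      (fun q => (starRingEnd ℂ) (c q) * d q)
    simp only [Function.Embedding.coeFn_mk] at hmap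
    rw [← hmap]
    refine (Finset.sum_subset (Finset.subset_univ _) ?_).symm
    intro q _ hq
    apply hzero
    by_contra h
    push_neg at h
    exact hq (Finset.mem_map.mpr ⟨⟨(q : ℕ), h⟩, Finset.mem_univ _, by
      simp [Fin.castLE]⟩)
  have coef2 : (PLᴴ * ((1 : Matrix (Fin (2 ^ b)) (Fin (2 ^ b)) ℂ)
      - ∑ j : Fin m, Matrix.single (Fin.castLE hm j) (Fin.castLE hm j) (1 : ℂ))
      * PR) 0 0 = 0 := by
    have expand : PLᴴ * ((1 : Matrix (Fin (2 ^ b)) (Fin (2 ^ b)) ℂ)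
        - ∑ j : Fin m, Matrix.single (Fin.castLE hm j) (Fin.castLE hm j) (1 : ℂ)) * PR
        = PLᴴ * PR - ∑ j : Fin m,
            PLᴴ * Matrix.single (Fin.castLE hm j) (Fin.castLE hm j) (1 : ℂ) * PR := by
      rw [mul_sub, sub_mul, mul_one]
      congr 1
      rw [Finset.mul_sum, Finset.sum_mul]
    rw [expand, Matrix.sub_apply, Matrix.sum_apply]
    have h00 : (PLᴴ * PR) 0 0 = ∑ q : Fin (2 ^ b), (starRingEnd ℂ) (c q) * d q := by
      rw [Matrix.mul_apply]
      refine Finset.sum_congr rfl fun q _ => ?_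
      rw [Matrix.conjTranspose_apply, hc, hd, starRingEnd_apply]
    rw [h00, hsum0, Finset.sum_congr rfl fun j _ => coef1 j, sub_self]
  -- entrywise identity
  have hG : Matrix.of (fun i k : Fin (2 ^ s) =>
        ((PLᴴ ⊗ₖ (1 : Matrix (Fin (2 ^ a) × Fin (2 ^ s)) (Fin (2 ^ a) × Fin (2 ^ s)) ℂ)) * W *
          (PR ⊗ₖ (1 : Matrix (Fin (2 ^ a) × Fin (2 ^ s)) (Fin (2 ^ a) × Fin (2 ^ s)) ℂ)))
          (0, (0, i)) (0, (0, k)))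
      = ∑ j : Fin m,
          ((starRingEnd ℂ) (c (Fin.castLE hm j)) * d (Fin.castLE hm j)) • blk j := by
    ext i k
    rw [Matrix.of_apply, hprod, Matrix.add_apply, Matrix.sum_apply]
    simp only [Matrix.kroneckerMap_apply]
    rw [coef2, zero_mul, add_zero]
    rw [Matrix.sum_apply]
    exact Finset.sum_congr rfl fun j _ => by
      rw [coef1]; simp [hblkdef, Matrix.smul_apply, smul_eq_mul]
  rw [hAtot, hG]
  have hcast : ((α * β : ℝ) : ℂ) = (α : ℂ) * (β : ℂ) := by push_cast; ring
  have hsplit : (∑ j, y j • A j) - ((α * β : ℝ) : ℂ) • ∑ j : Fin m,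
        ((starRingEnd ℂ) (c (Fin.castLE hm j)) * d (Fin.castLE hm j)) • blk j
      = ∑ j : Fin m, (y j • (A j - (α : ℂ) • blk j)
          + ((y j - (β : ℂ) * ((starRingEnd ℂ) (c (Fin.castLE hm j)) * d (Fin.castLE hm j)))
              • ((α : ℂ) • blk j))) := by
    rw [hcast, Finset.smul_sum, ← Finset.sum_sub_distrib]
    exact Finset.sum_congr rfl fun j _ => by module
  rw [hsplit]
  have hblknorm : ∀ j : Fin m, ‖blk j‖ ≤ 1 := fun j => aux_norm_block (U j) (hUunitary j)
  calc ‖∑ j : Fin m, (y j • (A j - (α : ℂ) • blk j)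
          + ((y j - (β : ℂ) * ((starRingEnd ℂ) (c (Fin.castLE hm j)) * d (Fin.castLE hm j)))
              • ((α : ℂ) • blk j)))‖
      ≤ ∑ j : Fin m, ‖y j • (A j - (α : ℂ) • blk j)
          + ((y j - (β : ℂ) * ((starRingEnd ℂ) (c (Fin.castLE hm j)) * d (Fin.castLE hm j)))
              • ((α : ℂ) • blk j))‖ := norm_sum_le _ _
    _ ≤ ∑ j : Fin m, (‖y j‖ * ε₂
          + ‖(β : ℂ) * (starRingEnd ℂ) (c (Fin.castLE hm j)) * d (Fin.castLE hm j)
              - y j‖ * α) := by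
        refine Finset.sum_le_sum fun j _ => ?_
        refine (norm_add_le _ _).trans (add_le_add ?_ ?_)
        · rw [norm_smul]
          exact mul_le_mul_of_nonneg_left (hUblock j) (norm_nonneg _)
        · rw [norm_smul, norm_smul]
          have e1 : ‖y j
              - (β : ℂ) * ((starRingEnd ℂ) (c (Fin.castLE hm j)) * d (Fin.castLE hm j))‖
              = ‖(β : ℂ) * (starRingEnd ℂ) (c (Fin.castLE hm j))
                  * d (Fin.castLE hm j) - y j‖ := by
            rw [norm_sub_rev]
            ring_nf
          rw [e1]
          have e2 : ‖(α : ℂ)‖ * ‖blk j‖ ≤ α := by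
            rw [Complex.norm_real, Real.norm_eq_abs, abs_of_pos hα]
            nlinarith [hblknorm j, norm_nonneg (blk j)]
          have := norm_nonneg ((β : ℂ) * (starRingEnd ℂ) (c (Fin.castLE hm j))
              * d (Fin.castLE hm j) - y j)
          nlinarith [norm_nonneg ((α : ℂ)), norm_nonneg (blk j)]
    _ ≤ α * ε₁ + β * ε₂ := by
        rw [Finset.sum_add_distrib, ← Finset.sum_mul, ← Finset.sum_mul]
        have hn1 : (0:ℝ) ≤ ∑ j : Fin m, ‖(β : ℂ)
            * (starRingEnd ℂ) (c (Fin.castLE hm j)) * d (Fin.castLE hm j) - y j‖ :=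
          Finset.sum_nonneg fun j _ => norm_nonneg _
        have hn2 : (0:ℝ) ≤ ∑ j : Fin m, ‖y j‖ :=
          Finset.sum_nonneg fun j _ => norm_nonneg _
        nlinarith [hprep, hy]
end

section
/- For every integer d ≥ 1, the central finite-difference coefficients satisfy Σ_{k=−d}^{d} |c_{d,k}| ≤ 2·(ln d + 1). -/
lemma fact_sq_le (d k : ℕ) (hk : k ≤ d) :
    d.factorial * d.factorial ≤ (d - k).factorial * (d + k).factorial := by
  induction k with
  | zero => simp
  | succ k ih =>
    have hk' : k ≤ d := Nat.le_of_succ_le hk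
    refine (ih hk').trans ?_
    have e1 : (d - k).factorial = (d - (k + 1) + 1) * (d - (k + 1)).factorial := by
      rw [show d - k = d - (k + 1) + 1 by omega, Nat.factorial_succ]
    have e2 : (d + (k + 1)).factorial = (d + k + 1) * (d + k).factorial := by
      rw [show d + (k + 1) = (d + k) + 1 by omega, Nat.factorial_succ]
    rw [e1, e2]
    have h2 : d - (k + 1) + 1 ≤ d + k + 1 := by omega
    calc (d - (k + 1) + 1) * (d - (k + 1)).factorial * (d + k).factorial
        = ((d - (k + 1)).factorial * (d + k).factorial) * (d - (k + 1) + 1) := by ring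
      _ ≤ ((d - (k + 1)).factorial * (d + k).factorial) * (d + k + 1) :=
          Nat.mul_le_mul_left _ h2
      _ = (d - (k + 1)).factorial * ((d + k + 1) * (d + k).factorial) := by ring

/-- The central finite-difference coefficients `c_{d,k}` of order `2d`:
`c_{d,k} = (-1)^(k+1) · (d!)² / (k·(d-k)!·(d+k)!)` for `k ≠ 0`, and `c_{d,0} = 0`. -/
noncomputable def centralFDCoeff (d : ℕ) (k : ℤ) : ℝ :=
  if k = 0 then 0
  else (-1 : ℝ) ^ (k + 1) * ((d.factorial : ℝ)) ^ 2 /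
    ((k : ℝ) * (((d : ℤ) - k).toNat.factorial : ℝ) * (((d : ℤ) + k).toNat.factorial : ℝ))

lemma abs_coeff_le (d : ℕ) (k : ℤ) (hk : k ≠ 0) (hk2 : k.natAbs ≤ d) :
    |centralFDCoeff d k| ≤ 1 / |(k : ℝ)| := by
  rw [centralFDCoeff, if_neg hk]
  set B : ℕ := ((d : ℤ) - k).toNat.factorial with hB
  set C : ℕ := ((d : ℤ) + k).toNat.factorial with hC
  have hBC : d.factorial * d.factorial ≤ B * C := by
    rcases Int.natAbs_eq k with h | h
    · have e1 : ((d : ℤ) - k).toNat = d - k.natAbs := by omega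
      have e2 : ((d : ℤ) + k).toNat = d + k.natAbs := by omega
      rw [hB, hC, e1, e2]
      exact fact_sq_le d k.natAbs hk2
    · have e1 : ((d : ℤ) - k).toNat = d + k.natAbs := by omega
      have e2 : ((d : ℤ) + k).toNat = d - k.natAbs := by omega
      rw [hB, hC, e1, e2]
      exact (fact_sq_le d k.natAbs hk2).trans (Nat.mul_comm _ _).le
  have habs : |(-1 : ℝ) ^ (k + 1) * ((d.factorial : ℝ)) ^ 2 / ((k : ℝ) * (B : ℝ) * (C : ℝ))|
      = ((d.factorial : ℝ)) ^ 2 / (|(k : ℝ)| * (B : ℝ) * (C : ℝ)) := by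
    have h1 : |(-1 : ℝ) ^ (k + 1)| = 1 := by
      rcases Int.even_or_odd (k + 1) with h | h
      · rw [h.neg_one_zpow, abs_one]
      · rw [h.neg_one_zpow, abs_neg, abs_one]
    rw [abs_div, abs_mul, h1, one_mul, abs_mul, abs_mul]
    rw [abs_pow, Nat.abs_cast, Nat.abs_cast, Nat.abs_cast]
  rw [habs]
  have hkpos : (0 : ℝ) < |(k : ℝ)| := by
    simp only [abs_pos, ne_eq, Int.cast_eq_zero]; exact hk
  have hBpos : (0 : ℝ) < (B : ℝ) := by exact_mod_cast (Nat.factorial_pos _)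
  have hCpos : (0 : ℝ) < (C : ℝ) := by exact_mod_cast (Nat.factorial_pos _)
  rw [div_le_div_iff₀ (by positivity) hkpos]
  have hBC' : ((d.factorial : ℝ)) ^ 2 ≤ (B : ℝ) * (C : ℝ) := by
    rw [sq]
    exact_mod_cast hBC
  nlinarith [hkpos, hBpos, hCpos, hBC']

/-- For every `d ≥ 1`, `Σ_{k=-d}^{d} |c_{d,k}| ≤ 2·(ln d + 1)`. -/
theorem sum_abs_centralFDCoeff_le (d : ℕ) (hd : 1 ≤ d) :
    ∑ k ∈ Finset.Icc (-(d : ℤ)) (d : ℤ), |centralFDCoeff d k| ≤ 2 * (Real.log d + 1) := by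
  have h1 : ∑ k ∈ Finset.Icc (-(d : ℤ)) (d : ℤ), |centralFDCoeff d k|
      ≤ ∑ k ∈ Finset.Icc (-(d : ℤ)) (d : ℤ), (if k = 0 then (0:ℝ) else 1 / |(k : ℝ)|) := by
    apply Finset.sum_le_sum
    intro k hk
    simp only [Finset.mem_Icc] at hk
    by_cases h : k = 0
    · simp [h, centralFDCoeff]
    · rw [if_neg h]
      exact abs_coeff_le d k h (by omega)
  refine h1.trans ?_
  have hsplit : Finset.Icc (-(d : ℤ)) (d : ℤ)
      = Finset.Icc (-(d : ℤ)) (-1) ∪ Finset.Icc 0 (d : ℤ) := by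
    ext x; simp only [Finset.mem_Icc, Finset.mem_union]; omega
  have hdisj : Disjoint (Finset.Icc (-(d:ℤ)) (-1)) (Finset.Icc 0 (d:ℤ)) := by
    rw [Finset.disjoint_left]
    intro x hx hx'
    simp only [Finset.mem_Icc] at hx hx'
    omega
  rw [hsplit, Finset.sum_union hdisj]
  have hneg : ∑ k ∈ Finset.Icc (-(d:ℤ)) (-1), (if k = 0 then (0:ℝ) else 1 / |(k:ℝ)|)
      = ∑ k ∈ Finset.Icc (1:ℤ) (d:ℤ), (if k = 0 then (0:ℝ) else 1 / |(k:ℝ)|) := by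
    refine Finset.sum_nbij' (fun i => -i) (fun i => -i) ?_ ?_ ?_ ?_ ?_
    · intro a ha; simp only [Finset.mem_Icc] at *; omega
    · intro a ha; simp only [Finset.mem_Icc] at *; omega
    · intro a _; ring
    · intro a _; ring
    · intro a _
      by_cases h : a = 0
      · simp [h]
      · rw [if_neg h, if_neg (by simpa using h)]
        push_cast
        rw [abs_neg]
  have hzero : Finset.Icc (0:ℤ) (d:ℤ) = insert 0 (Finset.Icc (1:ℤ) (d:ℤ)) := by
    ext x; simp only [Finset.mem_Icc, Finset.mem_insert]; omega
  rw [hneg, hzero, Finset.sum_insert (by simp), if_pos rfl, zero_add]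
  have hnat : ∑ k ∈ Finset.Icc (1:ℤ) (d:ℤ), (if k = 0 then (0:ℝ) else 1 / |(k:ℝ)|)
      = ∑ i ∈ Finset.Icc 1 d, ((i : ℝ))⁻¹ := by
    refine Finset.sum_nbij' (fun i => i.toNat) (fun i => (i : ℤ)) ?_ ?_ ?_ ?_ ?_
    · intro a ha; simp only [Finset.mem_Icc] at *; omega
    · intro a ha; simp only [Finset.mem_Icc] at *; omega
    · intro a ha; simp only [Finset.mem_Icc] at ha; simp; omega
    · intro a ha; simp only [Finset.mem_Icc] at ha; simp
    · intro a ha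
      simp only [Finset.mem_Icc] at ha
      rw [if_neg (by omega), abs_of_pos (by exact_mod_cast (by omega : (0:ℤ) < a)), one_div]
      congr 1
      rw [show ((a.toNat : ℕ) : ℝ) = ((a.toNat : ℤ) : ℝ) by push_cast; ring]
      congr 1
      omega
  rw [hnat]
  have hh : ∑ i ∈ Finset.Icc 1 d, ((i : ℝ))⁻¹ ≤ 1 + Real.log d := by
    have h2 := harmonic_le_one_add_log d
    rw [harmonic_eq_sum_Icc] at h2
    push_cast at h2
    exact h2
  linarith
end

section
/- Let M ≥ 1, let A_1,…,A_M be n×n complex matrices, and let P_1,…,P_M be m×m complex matrices satisfying P_l² = P_l for all l, P_k·P_l = 0 for all k ≠ l, and Σ_{l=1}^{M} P_l = I_m. Then the ordered product of matrix exponentials satisfies ∏_{l=1}^{M} exp(A_l ⊗ P_l) = Σ_{l=1}^{M} exp(A_l) ⊗ P_l. -/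
open scoped Kronecker

open Matrix NormedSpace

private lemma kron_pow_aux {n m : ℕ} (A : Matrix (Fin n) (Fin n) ℂ)
    (P : Matrix (Fin m) (Fin m) ℂ) (hP : P * P = P) :
    ∀ k : ℕ, (A ⊗ₖ P) ^ (k + 1) = (A ^ (k + 1)) ⊗ₖ P := by
  intro k
  induction k with
  | zero => simp
  | succ k ih =>
    rw [pow_succ, ih, ← Matrix.mul_kronecker_mul, hP, ← pow_succ]

private lemma sub_kron_aux {n m : ℕ} (X Y : Matrix (Fin n) (Fin n) ℂ)
    (P : Matrix (Fin m) (Fin m) ℂ) : (X - Y) ⊗ₖ P = X ⊗ₖ P - Y ⊗ₖ P := by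
  ext ⟨i, j⟩ ⟨k, l⟩
  simp [Matrix.kroneckerMap_apply, sub_mul]

private lemma one_kron_sum_aux {n m M : ℕ} (P : Fin M → Matrix (Fin m) (Fin m) ℂ) :
    ∑ l, (1 : Matrix (Fin n) (Fin n) ℂ) ⊗ₖ P l =
      (1 : Matrix (Fin n) (Fin n) ℂ) ⊗ₖ (∑ l, P l) := by
  ext ⟨i, j⟩ ⟨k, l⟩
  simp [Matrix.kroneckerMap_apply, Matrix.sum_apply, Finset.mul_sum]

private lemma exp_kron_aux {n m : ℕ} (A : Matrix (Fin n) (Fin n) ℂ)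
    (P : Matrix (Fin m) (Fin m) ℂ) (hP : P * P = P) :
    exp (A ⊗ₖ P) = 1 + (exp A - 1) ⊗ₖ P := by
  letI : NormedRing (Matrix (Fin n) (Fin n) ℂ) := Matrix.linftyOpNormedRing
  letI : NormedAlgebra ℂ (Matrix (Fin n) (Fin n) ℂ) := Matrix.linftyOpNormedAlgebra
  letI : NormedRing (Matrix (Fin n × Fin m) (Fin n × Fin m) ℂ) := Matrix.linftyOpNormedRing
  letI : NormedAlgebra ℂ (Matrix (Fin n × Fin m) (Fin n × Fin m) ℂ) :=
    Matrix.linftyOpNormedAlgebra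
  -- the continuous linear map `X ↦ X ⊗ₖ P`
  let L : Matrix (Fin n) (Fin n) ℂ →L[ℂ] Matrix (Fin n × Fin m) (Fin n × Fin m) ℂ :=
    LinearMap.toContinuousLinearMap ((Matrix.kroneckerBilinear).flip P)
  have hLapp : ∀ X, L X = X ⊗ₖ P := fun X => rfl
  have hsum1 : Summable (fun k : ℕ => ((Nat.factorial k : ℂ))⁻¹ • A ^ k) :=
    NormedSpace.expSeries_summable' (𝕂 := ℂ) A
  have hsum2 : Summable (fun k : ℕ => ((Nat.factorial k : ℂ))⁻¹ • ((A ^ k) ⊗ₖ P)) := by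
    have h := hsum1.map L.toLinearMap.toAddMonoidHom L.continuous
    refine h.congr fun k => ?_
    simp only [Function.comp_apply, LinearMap.toAddMonoidHom_coe, ContinuousLinearMap.coe_coe,
      hLapp]
    exact Matrix.smul_kronecker _ _ _
  have hsum3 : Summable (fun k : ℕ =>
      (if k = 0 then ((1 : Matrix (Fin n × Fin m) (Fin n × Fin m) ℂ) - 1 ⊗ₖ P) else 0)) :=
    summable_of_ne_finset_zero (s := {0}) (by intro k hk; simp at hk; simp [hk])
  have key : ∀ k : ℕ, ((Nat.factorial k : ℂ))⁻¹ • (A ⊗ₖ P) ^ k =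
      ((Nat.factorial k : ℂ))⁻¹ • ((A ^ k) ⊗ₖ P) +
        (if k = 0 then ((1 : Matrix (Fin n × Fin m) (Fin n × Fin m) ℂ) - 1 ⊗ₖ P) else 0) := by
    intro k
    cases k with
    | zero => simp
    | succ k => simp [kron_pow_aux A P hP k]
  calc exp (A ⊗ₖ P) = ∑' k : ℕ, ((Nat.factorial k : ℂ))⁻¹ • (A ⊗ₖ P) ^ k := by
        rw [NormedSpace.exp_eq_tsum (𝕂 := ℂ)]
    _ = ∑' k : ℕ, (((Nat.factorial k : ℂ))⁻¹ • ((A ^ k) ⊗ₖ P) +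
        (if k = 0 then ((1 : Matrix (Fin n × Fin m) (Fin n × Fin m) ℂ) - 1 ⊗ₖ P) else 0)) :=
      tsum_congr key
    _ = (∑' k : ℕ, ((Nat.factorial k : ℂ))⁻¹ • ((A ^ k) ⊗ₖ P)) +
        ∑' k : ℕ, (if k = 0 then ((1 : Matrix (Fin n × Fin m) (Fin n × Fin m) ℂ) - 1 ⊗ₖ P)
          else 0) := hsum2.tsum_add hsum3
    _ = (exp A) ⊗ₖ P + (1 - 1 ⊗ₖ P) := by
      rw [tsum_ite_eq]
      congr 1
      rw [← hLapp]
      simp only [NormedSpace.exp_eq_tsum (𝕂 := ℂ)]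
      rw [L.map_tsum hsum1]
      exact tsum_congr fun k => by rw [_root_.map_smul, hLapp]
    _ = 1 + (exp A - 1) ⊗ₖ P := by
      rw [sub_kron_aux]
      abel

/-- **Projector exponential** (paper's Lemma): for a complete family of mutually orthogonal
projectors `P_l`, the ordered product of the exponentials `exp(A_l ⊗ P_l)` equals
`Σ_l exp(A_l) ⊗ P_l`. -/
theorem prod_exp_kronecker_projectors (M n m : ℕ) (hM : 1 ≤ M)
    (A : Fin M → Matrix (Fin n) (Fin n) ℂ) (P : Fin M → Matrix (Fin m) (Fin m) ℂ)
    (hidem : ∀ l, P l * P l = P l)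
    (horth : ∀ k l, k ≠ l → P k * P l = 0)
    (hsum : ∑ l, P l = 1) :
    ((List.finRange M).map (fun l => NormedSpace.exp (A l ⊗ₖ P l))).prod =
      ∑ l, NormedSpace.exp (A l) ⊗ₖ P l := by
  -- general claim for nodup lists
  have main : ∀ L : List (Fin M), L.Nodup →
      (L.map (fun l => NormedSpace.exp (A l ⊗ₖ P l))).prod =
        1 + ∑ l ∈ L.toFinset, (NormedSpace.exp (A l) - 1) ⊗ₖ P l := by
    intro L hL
    induction L with
    | nil => simp
    | cons a t ih =>
      have hat : a ∉ t := (List.nodup_cons.mp hL).1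
      have ht : t.Nodup := (List.nodup_cons.mp hL).2
      rw [List.map_cons, List.prod_cons, ih ht, exp_kron_aux (A a) (P a) (hidem a)]
      have hcross : ((NormedSpace.exp (A a) - 1) ⊗ₖ P a) *
          (∑ l ∈ t.toFinset, (NormedSpace.exp (A l) - 1) ⊗ₖ P l) = 0 := by
        rw [Finset.mul_sum]
        refine Finset.sum_eq_zero fun l hl => ?_
        have hal : a ≠ l := fun h => hat (h ▸ List.mem_toFinset.mp hl)
        rw [← Matrix.mul_kronecker_mul, horth a l hal, Matrix.kronecker_zero]
      rw [List.toFinset_cons, Finset.sum_insert (by simpa using hat)]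
      ring_nf
      rw [add_mul, one_mul, mul_add, mul_one, hcross]
      abel
  have hnodup : (List.finRange M).Nodup := List.nodup_finRange M
  rw [main _ hnodup]
  have htofin : (List.finRange M).toFinset = Finset.univ := by
    ext x; simp [List.mem_toFinset]
  rw [htofin]
  have : ∑ l : Fin M, (NormedSpace.exp (A l) - 1) ⊗ₖ P l =
      (∑ l : Fin M, NormedSpace.exp (A l) ⊗ₖ P l) - ∑ l : Fin M, (1 : Matrix (Fin n) (Fin n) ℂ) ⊗ₖ P l := by
    rw [← Finset.sum_sub_distrib]
    exact Finset.sum_congr rfl fun l _ => sub_kron_aux _ _ _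
  rw [this]
  have h1 : ∑ l : Fin M, (1 : Matrix (Fin n) (Fin n) ℂ) ⊗ₖ P l = 1 := by
    rw [one_kron_sum_aux, hsum, Matrix.one_kronecker_one]
  rw [h1]
  abel
end

section
/- Define u_k := 1/(4 − 4^{1/(2k−1)}) for integers k ≥ 2, and define T : ℕ≥1 × ℝ → ℝ recursively by T(1,t) := t and T(k,t) := 4·T(k−1, u_k·t) + T(k−1, (4·u_k − 1)·t) for k ≥ 2. Then for every integer k ≥ 1 and every real t ≥ 0, T(k,t) ≤ 5^{k−1}·t. -/
/-- The Trotter–Suzuki recursion coefficient `u_k = 1/(4 − 4^{1/(2k−1)})`. -/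
noncomputable def trotterCoeff (k : ℕ) : ℝ :=
  1 / (4 - (4 : ℝ) ^ ((1 : ℝ) / (2 * (k : ℝ) - 1)))

/-- Total evolution time `T(k, t)` of the `2k`-th order Trotter–Suzuki product formula:
`T(1, t) = t` and `T(k, t) = 4·T(k−1, u_k·t) + T(k−1, (4·u_k − 1)·t)` for `k ≥ 2`. -/
noncomputable def totalEvolTime : ℕ → ℝ → ℝ
  | 0, t => t
  | 1, t => t
  | (k + 2), t =>
      4 * totalEvolTime (k + 1) (trotterCoeff (k + 2) * t) +
        totalEvolTime (k + 1) ((4 * trotterCoeff (k + 2) - 1) * t)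

lemma trotterCoeff_bounds (k : ℕ) :
    1/3 ≤ trotterCoeff (k + 2) ∧ trotterCoeff (k + 2) ≤ 3/4 := by
  unfold trotterCoeff
  set e : ℝ := (1 : ℝ) / (2 * ((k : ℝ) + 2) - 1) with he
  have hk3 : (3 : ℝ) ≤ 2 * ((k : ℝ) + 2) - 1 := by
    have : (0:ℝ) ≤ (k:ℝ) := Nat.cast_nonneg k
    nlinarith
  have hepos : 0 < e := by
    rw [he]; positivity
  have hele : e ≤ 1/3 := by
    rw [he]
    rw [div_le_div_iff₀ (by linarith) (by norm_num)]
    linarith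
  have hx1 : (1 : ℝ) ≤ (4 : ℝ) ^ e := Real.one_le_rpow (by norm_num) hepos.le
  have hx2 : (4 : ℝ) ^ e ≤ 8/3 := by
    have h1 : (4 : ℝ) ^ e ≤ (4 : ℝ) ^ ((1:ℝ)/3) :=
      Real.rpow_le_rpow_of_exponent_le (by norm_num) hele
    have h2 : (4 : ℝ) ^ ((1:ℝ)/3) ≤ 8/3 := by
      have hpos : (0:ℝ) ≤ (4 : ℝ) ^ ((1:ℝ)/3) := Real.rpow_nonneg (by norm_num) _
      have hcube : ((4 : ℝ) ^ ((1:ℝ)/3)) ^ (3:ℕ) = 4 := by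
        rw [← Real.rpow_natCast ((4:ℝ) ^ ((1:ℝ)/3)) 3, ← Real.rpow_mul (by norm_num)]
        norm_num
      nlinarith [sq_nonneg ((4:ℝ) ^ ((1:ℝ)/3) - 8/3), sq_nonneg ((4:ℝ) ^ ((1:ℝ)/3) + 8/3)]
    linarith
  push_cast
  constructor
  · rw [le_div_iff₀ (by linarith)]
    linarith
  · rw [div_le_iff₀ (by linarith)]
    linarith

lemma totalEvolTime_le_aux (k : ℕ) : ∀ t : ℝ, 0 ≤ t → totalEvolTime (k + 1) t ≤ 5 ^ k * t := by
  induction k with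
  | zero => intro t ht; simp [totalEvolTime]
  | succ n ih =>
    intro t ht
    obtain ⟨h1, h2⟩ := trotterCoeff_bounds n
    set c := trotterCoeff (n + 2) with hc
    have hct : 0 ≤ c * t := mul_nonneg (by linarith) ht
    have hct' : 0 ≤ (4 * c - 1) * t := mul_nonneg (by linarith) ht
    have e1 := ih (c * t) hct
    have e2 := ih ((4 * c - 1) * t) hct'
    have hp : (0:ℝ) ≤ 5 ^ n := by positivity
    show 4 * totalEvolTime (n + 1) (c * t) + totalEvolTime (n + 1) ((4 * c - 1) * t) ≤ _
    have : 4 * (5 ^ n * (c * t)) + 5 ^ n * ((4 * c - 1) * t) ≤ 5 ^ (n + 1) * t := by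
      rw [pow_succ]
      nlinarith [mul_nonneg hp (mul_nonneg (by linarith : (0:ℝ) ≤ 6 - 8*c) ht)]
    linarith

/-- **Total evolution time of a higher-order product formula**: for all `k ≥ 1` and `t ≥ 0`,
`T(k, t) ≤ 5^{k−1}·t`. -/
theorem totalEvolTime_le (k : ℕ) (hk : 1 ≤ k) (t : ℝ) (ht : 0 ≤ t) :
    totalEvolTime k t ≤ 5 ^ (k - 1) * t := by
  obtain ⟨m, rfl⟩ := Nat.exists_eq_add_of_le hk
  rw [Nat.add_comm 1 m]
  simpa using totalEvolTime_le_aux m t ht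
end

section
/- Let ι be a finite nonempty type, let x, x' : ι → ℝ³ be functions whose components all lie in the interval [−x_max, x_max] for some x_max ≥ 0, let Z, Z' be reals with 0 ≤ Z ≤ Z_max and 0 ≤ Z' ≤ Z_max, let Δ > 0, and fix a coordinate index j ∈ {1,2,3}. Let V be the diagonal matrix on ℂ^ι with entries V_{i,i} = Z·Z'·(x(i)_j − x'(i)_j)/((‖x(i) − x'(i)‖² + Δ²)^{3/2}), where ‖·‖ is the Euclidean norm on ℝ³. Let g_p be a positive integer, d_p ≥ 1 an integer, h_p > 0, and let D_p be the discrete derivative operator of order 2d_p with periodic boundary conditions on ℂ^{ℤ/g_pℤ} with grid spacing h_p. Then ‖V ⊗ D_p‖ ≤ (2·Z_max²·x_max/Δ³) · 2·(ln d_p + 1)/h_p. -/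
open scoped Matrix.Norms.L2Operator Kronecker

/-- The discrete derivative operator of order `2d` with periodic boundary conditions on
`ℂ^{ℤ/gℤ}` with grid spacing `h`:  `D = (1/h)·Σ_x Σ_{k=-d}^{d} c_{d,k}·E_{x-k,x}`. -/
noncomputable def discreteDeriv (g : ℕ) [NeZero g] (h : ℝ) (d : ℕ) :
    Matrix (ZMod g) (ZMod g) ℂ :=
  ((1 / h : ℝ) : ℂ) •
    ∑ x : ZMod g, ∑ k ∈ Finset.Icc (-(d : ℤ)) (d : ℤ),
      ((centralFDCoeff d k : ℝ) : ℂ) • Matrix.single (x - (k : ZMod g)) x (1 : ℂ)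

open Matrix

lemma l2_opNorm_le_of_forall {m n : Type*} [Fintype m] [Fintype n] [DecidableEq n]
    (A : Matrix m n ℂ) {C : ℝ} (hC : 0 ≤ C)
    (h : ∀ v : EuclideanSpace ℂ n, ‖(EuclideanSpace.equiv m ℂ).symm (A *ᵥ v)‖ ≤ C * ‖v‖) :
    ‖A‖ ≤ C := by
  rw [Matrix.l2_opNorm_def]
  exact ContinuousLinearMap.opNorm_le_bound _ hC (fun v => h v)

lemma euc_sq {m : Type*} [Fintype m] (z : m → ℂ) :
    ‖(EuclideanSpace.equiv m ℂ).symm z‖ ^ 2 = ∑ y, ‖z y‖ ^ 2 := by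
  rw [EuclideanSpace.norm_eq, Real.sq_sqrt (by positivity)]
  rfl

lemma shift_apply (g : ℕ) [NeZero g] (k a b : ZMod g) :
    (∑ x : ZMod g, Matrix.single (x - k) x (1 : ℂ)) a b =
      if a = b - k then 1 else 0 := by
  simp only [Matrix.sum_apply, Matrix.single, Matrix.of_apply]
  rw [Finset.sum_eq_single b]
  · simp [eq_comm]
  · intro c _ hc; simp [hc]
  · simp

lemma shift_norm_le (g : ℕ) [NeZero g] (k : ZMod g) :
    ‖∑ x : ZMod g, Matrix.single (x - k) x (1 : ℂ)‖ ≤ 1 := by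
  apply l2_opNorm_le_of_forall _ zero_le_one
  intro v
  rw [one_mul]
  have hmv : ∀ a, ((∑ x : ZMod g, Matrix.single (x - k) x (1 : ℂ)) *ᵥ ⇑v) a
      = v (a + k) := by
    intro a
    simp only [Matrix.mulVec, dotProduct, shift_apply, ite_mul, one_mul, zero_mul]
    rw [Finset.sum_eq_single (a + k)]
    · simp
    · intro c _ hc
      rw [if_neg]
      intro hac
      exact hc (by rw [hac]; ring)
    · simp
  have h1 : ‖(EuclideanSpace.equiv (ZMod g) ℂ).symm
      ((∑ x : ZMod g, Matrix.single (x - k) x (1 : ℂ)) *ᵥ ⇑v)‖ ^ 2 = ‖v‖ ^ 2 := by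
    rw [euc_sq]
    simp only [hmv]
    rw [show ‖v‖ ^ 2 = ∑ y, ‖v y‖ ^ 2 from euc_sq (⇑v)]
    exact Fintype.sum_equiv (Equiv.addRight k) _ _ (fun a => rfl)
  have h2 := congrArg Real.sqrt h1
  rw [Real.sqrt_sq (norm_nonneg _), Real.sqrt_sq (norm_nonneg _)] at h2
  exact le_of_eq h2

lemma kron_diag_norm_le {ι m : Type*} [Fintype ι] [DecidableEq ι] [Fintype m] [DecidableEq m]
    (v : ι → ℂ) (B : Matrix m m ℂ) {C : ℝ} (hC0 : 0 ≤ C) (hC : ∀ i, ‖v i‖ ≤ C) :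
    ‖Matrix.diagonal v ⊗ₖ B‖ ≤ C * ‖B‖ := by
  apply l2_opNorm_le_of_forall _ (by positivity)
  intro u
  have hmv : ∀ p : ι × m, ((Matrix.diagonal v ⊗ₖ B) *ᵥ ⇑u) p
      = v p.1 * (B *ᵥ (fun x => u (p.1, x))) p.2 := by
    intro p
    simp only [Matrix.mulVec, dotProduct, Fintype.sum_prod_type,
      Matrix.kroneckerMap_apply, Matrix.diagonal_apply]
    rw [Finset.sum_eq_single p.1]
    · simp [Finset.mul_sum, mul_assoc]
    · intro c _ hc; simp [Ne.symm hc]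
    · simp
  have key : ‖(EuclideanSpace.equiv (ι × m) ℂ).symm ((Matrix.diagonal v ⊗ₖ B) *ᵥ ⇑u)‖ ^ 2
      ≤ (C * ‖B‖ * ‖u‖) ^ 2 := by
    rw [euc_sq]
    simp only [hmv]
    have step1 : ∑ p : ι × m, ‖v p.1 * (B *ᵥ (fun x => u (p.1, x))) p.2‖ ^ 2
        ≤ ∑ i : ι, C ^ 2 * (‖B‖ * ‖(EuclideanSpace.equiv m ℂ).symm (fun x => u (i, x))‖) ^ 2 := by
      rw [Fintype.sum_prod_type]
      apply Finset.sum_le_sum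
      intro i _
      have hB := Matrix.l2_opNorm_mulVec B ((EuclideanSpace.equiv m ℂ).symm (fun x => u (i, x)))
      calc ∑ y : m, ‖v i * (B *ᵥ (fun x => u (i, x))) y‖ ^ 2
          = ‖v i‖ ^ 2 * ∑ y : m, ‖(B *ᵥ (fun x => u (i, x))) y‖ ^ 2 := by
            rw [Finset.mul_sum]; congr 1; ext y; rw [norm_mul]; ring
        _ ≤ C ^ 2 * ∑ y : m, ‖(B *ᵥ (fun x => u (i, x))) y‖ ^ 2 := by
            apply mul_le_mul_of_nonneg_right _ (by positivity)
            exact pow_le_pow_left₀ (norm_nonneg _) (hC i) 2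
        _ = C ^ 2 * ‖(EuclideanSpace.equiv m ℂ).symm (B *ᵥ (fun x => u (i, x)))‖ ^ 2 := by
            rw [euc_sq]
        _ ≤ C ^ 2 * (‖B‖ * ‖(EuclideanSpace.equiv m ℂ).symm (fun x => u (i, x))‖) ^ 2 := by
            apply mul_le_mul_of_nonneg_left _ (by positivity)
            exact pow_le_pow_left₀ (norm_nonneg _) hB 2
    have step2 : ∑ i : ι, C ^ 2 * (‖B‖ * ‖(EuclideanSpace.equiv m ℂ).symm (fun x => u (i, x))‖) ^ 2
        = (C * ‖B‖) ^ 2 * ∑ i : ι, ‖(EuclideanSpace.equiv m ℂ).symm (fun x => u (i, x))‖ ^ 2 := by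
      rw [Finset.mul_sum]; congr 1; ext i; ring
    have step3 : ∑ i : ι, ‖(EuclideanSpace.equiv m ℂ).symm (fun x => u (i, x))‖ ^ 2 = ‖u‖ ^ 2 := by
      simp only [euc_sq]
      rw [show (‖u‖ : ℝ) ^ 2 = ∑ p : ι × m, ‖u p‖ ^ 2 from euc_sq (⇑u),
        Fintype.sum_prod_type]
    calc _ ≤ _ := step1
      _ = _ := step2
      _ = (C * ‖B‖ * ‖u‖) ^ 2 := by rw [step3]; ring
  have h2 : ‖(EuclideanSpace.equiv (ι × m) ℂ).symm ((Matrix.diagonal v ⊗ₖ B) *ᵥ ⇑u)‖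
      ≤ C * ‖B‖ * ‖u‖ := by
    have h3 := Real.sqrt_le_sqrt key
    rwa [Real.sqrt_sq (norm_nonneg _), Real.sqrt_sq (by positivity)] at h3
  exact h2

lemma fact_sq_le_s13 {d a b : ℕ} (hab : a + b = 2 * d) :
    d.factorial * d.factorial ≤ a.factorial * b.factorial := by
  have ha : a ≤ 2 * d := by omega
  have h1 := Nat.choose_mul_factorial_mul_factorial ha
  have h2 := Nat.choose_mul_factorial_mul_factorial (show d ≤ 2 * d by omega)
  have hb : 2 * d - a = b := by omega
  have hd : 2 * d - d = d := by omega
  rw [hb] at h1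
  rw [hd] at h2
  have hle : Nat.choose (2 * d) a ≤ Nat.choose (2 * d) d := by
    have := Nat.choose_le_middle a (2 * d)
    rwa [Nat.mul_div_cancel_left d (by norm_num : 0 < 2)] at this
  have hpos : 0 < Nat.choose (2 * d) d := Nat.choose_pos (by omega)
  have : Nat.choose (2 * d) d * (d.factorial * d.factorial)
      ≤ Nat.choose (2 * d) d * (a.factorial * b.factorial) := by
    calc Nat.choose (2 * d) d * (d.factorial * d.factorial)
        = Nat.choose (2 * d) d * d.factorial * d.factorial := by ring
      _ = Nat.choose (2 * d) a * a.factorial * b.factorial := by rw [h2, h1]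
      _ ≤ Nat.choose (2 * d) d * a.factorial * b.factorial := by
          exact Nat.mul_le_mul_right _ (Nat.mul_le_mul_right _ hle)
      _ = Nat.choose (2 * d) d * (a.factorial * b.factorial) := by ring
  exact Nat.le_of_mul_le_mul_left this hpos

lemma abs_coeff_le_s13 {d : ℕ} {k : ℤ} (hk : k ∈ Finset.Icc (-(d : ℤ)) (d : ℤ)) :
    |centralFDCoeff d k| ≤ if k = 0 then 0 else ((k.natAbs : ℝ))⁻¹ := by
  rw [Finset.mem_Icc] at hk
  by_cases h0 : k = 0
  · simp [centralFDCoeff, h0]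
  · rw [if_neg h0]
    unfold centralFDCoeff
    rw [if_neg h0]
    set a := ((d : ℤ) - k).toNat
    set b := ((d : ℤ) + k).toNat
    have hab : a + b = 2 * d := by omega
    have hfact : (d.factorial : ℝ) ^ 2 ≤ (a.factorial : ℝ) * (b.factorial : ℝ) := by
      rw [sq]
      exact_mod_cast fact_sq_le_s13 hab
    have hk0 : (0 : ℝ) < |(k : ℝ)| := by
      simp only [abs_pos]
      exact_mod_cast h0
    have hA : (0 : ℝ) < (a.factorial : ℝ) := by positivity
    have hB : (0 : ℝ) < (b.factorial : ℝ) := by positivity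
    have habs : |(-1 : ℝ) ^ (k + 1) * (d.factorial : ℝ) ^ 2 /
        ((k : ℝ) * (a.factorial : ℝ) * (b.factorial : ℝ))|
        = (d.factorial : ℝ) ^ 2 / (|(k : ℝ)| * (a.factorial : ℝ) * (b.factorial : ℝ)) := by
      have hsg : |(-1 : ℝ) ^ (k + 1)| = 1 := by
        rcases Int.even_or_odd (k + 1) with he | ho
        · rw [he.neg_one_zpow, abs_one]
        · rw [ho.neg_one_zpow, abs_neg, abs_one]
      rw [abs_div, abs_mul, abs_mul, abs_mul, hsg, one_mul,
        abs_of_nonneg (by positivity : (0:ℝ) ≤ (d.factorial : ℝ) ^ 2),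
        abs_of_nonneg hA.le, abs_of_nonneg hB.le]
    rw [habs]
    have hknat : (k.natAbs : ℝ) = |(k : ℝ)| := by
      simp [Nat.cast_natAbs]
    rw [hknat, inv_eq_one_div]
    rw [div_le_div_iff₀ (by positivity) hk0]
    calc (d.factorial : ℝ) ^ 2 * |(k : ℝ)|
        ≤ ((a.factorial : ℝ) * (b.factorial : ℝ)) * |(k : ℝ)| :=
          mul_le_mul_of_nonneg_right hfact (abs_nonneg _)
      _ = 1 * (|(k : ℝ)| * (a.factorial : ℝ) * (b.factorial : ℝ)) := by ring

lemma sum_weight_eq (d : ℕ) :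
    ∑ k ∈ Finset.Icc (-(d : ℤ)) (d : ℤ),
      (if k = 0 then (0:ℝ) else ((k.natAbs : ℝ))⁻¹) = 2 * (harmonic d : ℝ) := by
  induction d with
  | zero => simp
  | succ d ih =>
    have hset : Finset.Icc (-(d + 1 : ℤ)) (d + 1 : ℤ)
        = insert (-(d + 1 : ℤ)) (insert ((d + 1 : ℤ)) (Finset.Icc (-(d : ℤ)) (d : ℤ))) := by
      ext z
      simp only [Finset.mem_Icc, Finset.mem_insert]
      omega
    have h1 : (-(d + 1 : ℤ)) ∉ insert ((d + 1 : ℤ)) (Finset.Icc (-(d : ℤ)) (d : ℤ)) := by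
      simp only [Finset.mem_insert, Finset.mem_Icc]
      omega
    have h2 : ((d + 1 : ℤ)) ∉ Finset.Icc (-(d : ℤ)) (d : ℤ) := by
      simp only [Finset.mem_Icc]
      omega
    rw [show ((d + 1 : ℕ) : ℤ) = (d + 1 : ℤ) by push_cast; ring, hset,
      Finset.sum_insert h1, Finset.sum_insert h2, ih, harmonic_succ]
    have hn1 : (-(d + 1 : ℤ)) ≠ 0 := by omega
    have hn2 : ((d + 1 : ℤ)) ≠ 0 := by omega
    rw [if_neg hn1, if_neg hn2]
    have : ((-(d + 1 : ℤ)).natAbs : ℝ) = (d : ℝ) + 1 := by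
      rw [show (-(d + 1 : ℤ)).natAbs = d + 1 by omega]
      push_cast; ring
    rw [this, show (((d + 1 : ℤ)).natAbs : ℝ) = (d : ℝ) + 1 by
      rw [show ((d + 1 : ℤ)).natAbs = d + 1 by omega]; push_cast; ring]
    push_cast
    ring

lemma sum_abs_coeff_le (d : ℕ) :
    ∑ k ∈ Finset.Icc (-(d : ℤ)) (d : ℤ), |centralFDCoeff d k| ≤ 2 * (Real.log d + 1) := by
  calc ∑ k ∈ Finset.Icc (-(d : ℤ)) (d : ℤ), |centralFDCoeff d k|
      ≤ ∑ k ∈ Finset.Icc (-(d : ℤ)) (d : ℤ),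
          (if k = 0 then (0:ℝ) else ((k.natAbs : ℝ))⁻¹) :=
        Finset.sum_le_sum fun k hk => abs_coeff_le_s13 hk
    _ = 2 * (harmonic d : ℝ) := sum_weight_eq d
    _ ≤ 2 * (1 + Real.log d) := by
        have := harmonic_le_one_add_log d
        linarith
    _ = 2 * (Real.log d + 1) := by ring

lemma norm_discreteDeriv_le (g : ℕ) [NeZero g] (d : ℕ) {h : ℝ} (hh : 0 < h) :
    ‖discreteDeriv g h d‖ ≤ 2 * (Real.log d + 1) / h := by
  unfold discreteDeriv
  rw [Finset.sum_comm]
  have hsm : ∀ k ∈ Finset.Icc (-(d : ℤ)) (d : ℤ),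
      ∑ x : ZMod g, ((centralFDCoeff d k : ℝ) : ℂ) • Matrix.single (x - (k : ZMod g)) x (1 : ℂ)
        = ((centralFDCoeff d k : ℝ) : ℂ) • ∑ x : ZMod g, Matrix.single (x - (k : ZMod g)) x (1 : ℂ) := by
    intro k _
    rw [Finset.smul_sum]
  rw [Finset.sum_congr rfl hsm, norm_smul]
  have hnorm1 : ‖((1 / h : ℝ) : ℂ)‖ = 1 / h := by
    rw [Complex.norm_real, Real.norm_eq_abs, abs_of_pos (by positivity)]
  rw [hnorm1]
  have hbound : ‖∑ k ∈ Finset.Icc (-(d : ℤ)) (d : ℤ), ((centralFDCoeff d k : ℝ) : ℂ) •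
      ∑ x : ZMod g, Matrix.single (x - (k : ZMod g)) x (1 : ℂ)‖
      ≤ 2 * (Real.log d + 1) := by
    calc ‖∑ k ∈ Finset.Icc (-(d : ℤ)) (d : ℤ), ((centralFDCoeff d k : ℝ) : ℂ) •
        ∑ x : ZMod g, Matrix.single (x - (k : ZMod g)) x (1 : ℂ)‖
        ≤ ∑ k ∈ Finset.Icc (-(d : ℤ)) (d : ℤ), ‖((centralFDCoeff d k : ℝ) : ℂ) •
            ∑ x : ZMod g, Matrix.single (x - (k : ZMod g)) x (1 : ℂ)‖ :=
          norm_sum_le _ _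
      _ ≤ ∑ k ∈ Finset.Icc (-(d : ℤ)) (d : ℤ), |centralFDCoeff d k| := by
          apply Finset.sum_le_sum
          intro k _
          rw [norm_smul, Complex.norm_real, Real.norm_eq_abs]
          calc |centralFDCoeff d k| * ‖∑ x : ZMod g, Matrix.single (x - (k : ZMod g)) x (1 : ℂ)‖
              ≤ |centralFDCoeff d k| * 1 :=
                mul_le_mul_of_nonneg_left (shift_norm_le g _) (abs_nonneg _)
            _ = |centralFDCoeff d k| := mul_one _
      _ ≤ 2 * (Real.log d + 1) := sum_abs_coeff_le d
  calc 1 / h * ‖∑ k ∈ Finset.Icc (-(d : ℤ)) (d : ℤ), ((centralFDCoeff d k : ℝ) : ℂ) •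
      ∑ x : ZMod g, Matrix.single (x - (k : ZMod g)) x (1 : ℂ)‖
      ≤ 1 / h * (2 * (Real.log d + 1)) :=
        mul_le_mul_of_nonneg_left hbound (by positivity)
    _ = 2 * (Real.log d + 1) / h := by ring


/-- **Spectral norm bound on the classical Coulomb-force Liouvillian term**
`V^{class}_{n,n',j} = V ⊗ D_p`, with `V` the diagonal matrix of the regularized Coulomb force:
`‖V ⊗ D_p‖ ≤ (2·Z_max²·x_max/Δ³)·2·(ln d_p + 1)/h_p`. -/
theorem coulomb_force_norm_le (ι : Type*) [Fintype ι] [Nonempty ι] [DecidableEq ι]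
    (x x' : ι → EuclideanSpace ℝ (Fin 3)) (xmax : ℝ) (hxmax : 0 ≤ xmax)
    (hx : ∀ i j, |x i j| ≤ xmax) (hx' : ∀ i j, |x' i j| ≤ xmax)
    (Z Z' Zmax : ℝ) (hZ0 : 0 ≤ Z) (hZ : Z ≤ Zmax) (hZ'0 : 0 ≤ Z') (hZ' : Z' ≤ Zmax)
    (Δ : ℝ) (hΔ : 0 < Δ) (j : Fin 3)
    (gp dp : ℕ) [NeZero gp] (hdp : 1 ≤ dp) (hp : ℝ) (hhp : 0 < hp) :
    ‖Matrix.diagonal (fun i : ι =>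
          ((Z * Z' * (x i j - x' i j) / ((‖x i - x' i‖ ^ 2 + Δ ^ 2) ^ ((3 : ℝ) / 2)) : ℝ) : ℂ))
        ⊗ₖ discreteDeriv gp hp dp‖ ≤
      (2 * Zmax ^ 2 * xmax / Δ ^ 3) * (2 * (Real.log dp + 1) / hp) := by
  have hZmax : 0 ≤ Zmax := le_trans hZ0 hZ
  set C : ℝ := 2 * Zmax ^ 2 * xmax / Δ ^ 3 with hC
  have hC0 : 0 ≤ C := by positivity
  have hentry : ∀ i : ι,
      ‖((Z * Z' * (x i j - x' i j) / ((‖x i - x' i‖ ^ 2 + Δ ^ 2) ^ ((3 : ℝ) / 2)) : ℝ) : ℂ)‖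
        ≤ C := by
    intro i
    rw [Complex.norm_real, Real.norm_eq_abs]
    have hq : (0 : ℝ) ≤ ‖x i - x' i‖ ^ 2 := sq_nonneg _
    have hpow : ((Δ ^ 2 : ℝ)) ^ ((3 : ℝ) / 2) = Δ ^ 3 := by
      rw [← Real.rpow_natCast Δ 2, ← Real.rpow_mul hΔ.le]
      norm_num
    have hs : Δ ^ 3 ≤ (‖x i - x' i‖ ^ 2 + Δ ^ 2) ^ ((3 : ℝ) / 2) := by
      rw [← hpow]
      exact Real.rpow_le_rpow (by positivity) (by linarith) (by norm_num)
    have hspos : (0 : ℝ) < (‖x i - x' i‖ ^ 2 + Δ ^ 2) ^ ((3 : ℝ) / 2) :=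
      lt_of_lt_of_le (by positivity) hs
    have hnum : |Z * Z' * (x i j - x' i j)| ≤ 2 * Zmax ^ 2 * xmax := by
      have ht : |x i j - x' i j| ≤ 2 * xmax := by
        calc |x i j - x' i j| ≤ |x i j| + |x' i j| := abs_sub _ _
          _ ≤ xmax + xmax := add_le_add (hx i j) (hx' i j)
          _ = 2 * xmax := by ring
      calc |Z * Z' * (x i j - x' i j)| = |Z| * |Z'| * |x i j - x' i j| := by
            rw [abs_mul, abs_mul]
        _ ≤ Zmax * Zmax * (2 * xmax) := by
            apply mul_le_mul _ ht (abs_nonneg _) (by positivity)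
            exact mul_le_mul (by rwa [abs_of_nonneg hZ0]) (by rwa [abs_of_nonneg hZ'0])
              (abs_nonneg _) hZmax
        _ = 2 * Zmax ^ 2 * xmax := by ring
    rw [abs_div, abs_of_pos hspos, hC]
    exact div_le_div₀ (by positivity) hnum (by positivity) hs
  calc ‖Matrix.diagonal (fun i : ι =>
          ((Z * Z' * (x i j - x' i j) / ((‖x i - x' i‖ ^ 2 + Δ ^ 2) ^ ((3 : ℝ) / 2)) : ℝ) : ℂ))
        ⊗ₖ discreteDeriv gp hp dp‖
      ≤ C * ‖discreteDeriv gp hp dp‖ := kron_diag_norm_le _ _ hC0 hentry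
    _ ≤ C * (2 * (Real.log dp + 1) / hp) :=
        mul_le_mul_of_nonneg_left (norm_discreteDeriv_le gp dp hhp) hC0
end
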